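/- Let L ≥ 1, ℓ a natural number, and s real. Then the ℓ-th derivative of the function s ↦ sin(L·s)/sin(s) is bounded in absolute value by C·L^{ℓ+1} for a constant C depending only on ℓ, uniformly for s ∈ [0, π]. -/

import Mathlib

lemma stmt4_aux (c : ℕ → ℂ) (L : ℕ) : ∀ ℓ : ℕ,
    iteratedDeriv ℓ (fun x : ℝ => ∑ k ∈ Finset.range L, Complex.exp (c k * x)) =
      fun s : ℝ => ∑ k ∈ Finset.range L, (c k) ^ ℓ * Complex.exp (c k * s) := by
  intro ℓ
  induction ℓ with
  | zero => simp
  | succ n ih =>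
    rw [iteratedDeriv_succ, ih]
    funext s
    have hterm : ∀ k : ℕ, HasDerivAt (fun x : ℝ => (c k) ^ n * Complex.exp (c k * x))
        ((c k) ^ (n + 1) * Complex.exp (c k * s)) s := by
      intro k
      have h1 : HasDerivAt (fun x : ℝ => c k * (x : ℂ)) (c k * 1) s :=
        (Complex.ofRealCLM.hasDerivAt).const_mul (c k)
      have h2 := (h1.cexp).const_mul ((c k) ^ n)
      exact h2.congr_deriv (by ring)
    have := HasDerivAt.fun_sum (u := Finset.range L) (fun k _ => hterm k)
    rw [this.deriv]


/-- For each `ℓ` there is a constant `C > 0` such that for every integer `L ≥ 1` and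
`s ∈ [0, π]`, the `ℓ`-th derivative of `s ↦ sin(Ls)/sin(s)` (written as the
Dirichlet-kernel-type trigonometric polynomial `∑_{k<L} e^{i(L-1-2k)s}`, which is the
continuous extension) is bounded by `C·L^{ℓ+1}`. -/
theorem stmt4 (ℓ : ℕ) :
    ∃ C > 0, ∀ L : ℕ, 1 ≤ L → ∀ s : ℝ, s ∈ Set.Icc 0 Real.pi →
      ‖iteratedDeriv ℓ (fun x : ℝ =>
          ∑ k ∈ Finset.range L, Complex.exp (Complex.I * ((L : ℂ) - 1 - 2 * k) * x)) s‖ ≤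
        C * (L : ℝ) ^ (ℓ + 1) := by
  refine ⟨1, one_pos, fun L hL s _ => ?_⟩
  have hrw := congrFun (stmt4_aux (fun k => Complex.I * ((L : ℂ) - 1 - 2 * k)) L ℓ) s
  rw [hrw]
  have hbound : ∀ k ∈ Finset.range L,
      ‖(Complex.I * ((L : ℂ) - 1 - 2 * k)) ^ ℓ *
        Complex.exp (Complex.I * ((L : ℂ) - 1 - 2 * k) * s)‖ ≤ (L : ℝ) ^ ℓ := by
    intro k hk
    rw [norm_mul, norm_pow]
    have hexp : ‖Complex.exp (Complex.I * ((L : ℂ) - 1 - 2 * k) * s)‖ = 1 := by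
      rw [Complex.norm_exp]
      have : (Complex.I * ((L : ℂ) - 1 - 2 * k) * s).re = 0 := by
        have : ((L : ℂ) - 1 - 2 * k) = ((L - 1 - 2 * k : ℝ) : ℂ) := by push_cast; ring
        rw [this]
        simp [Complex.mul_re]
      rw [this, Real.exp_zero]
    rw [hexp, mul_one]
    have hnorm : ‖Complex.I * ((L : ℂ) - 1 - 2 * k)‖ ≤ (L : ℝ) := by
      rw [norm_mul, Complex.norm_I, one_mul]
      have : ((L : ℂ) - 1 - 2 * k) = ((L - 1 - 2 * k : ℝ) : ℂ) := by push_cast; ring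
      rw [this, Complex.norm_real, Real.norm_eq_abs]
      have hk' : (k : ℝ) ≤ (L : ℝ) - 1 := by
        have := Finset.mem_range.mp hk
        have : (k : ℝ) + 1 ≤ L := by exact_mod_cast this
        linarith
      have hk0 : (0 : ℝ) ≤ k := Nat.cast_nonneg k
      rw [abs_le]
      constructor <;> linarith
    exact pow_le_pow_left₀ (norm_nonneg _) hnorm ℓ
  calc ‖∑ k ∈ Finset.range L, (Complex.I * ((L : ℂ) - 1 - 2 * k)) ^ ℓ *
        Complex.exp (Complex.I * ((L : ℂ) - 1 - 2 * k) * s)‖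
      ≤ ∑ k ∈ Finset.range L, ‖(Complex.I * ((L : ℂ) - 1 - 2 * k)) ^ ℓ *
        Complex.exp (Complex.I * ((L : ℂ) - 1 - 2 * k) * s)‖ := norm_sum_le _ _
    _ ≤ ∑ _k ∈ Finset.range L, (L : ℝ) ^ ℓ := Finset.sum_le_sum hbound
    _ = (L : ℝ) * (L : ℝ) ^ ℓ := by simp [mul_comm]
    _ = 1 * (L : ℝ) ^ (ℓ + 1) := by ring
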